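/- arXiv:1212.3631 — 2 statements merged into one kernel-verified Lean document; each statement's English description precedes it below -/
import Mathlib

section
/- One step of the proximal gradient method with step 1/α, α ≥ ‖D‖², does not increase the Lasso objective: if z⁺ = π_{λ/α}(z − (1/α)Dᵀ(Dz − x)), then (1/2)‖x − Dz⁺‖₂² + λ‖z⁺‖₁ ≤ (1/2)‖x − Dz‖₂² + λ‖z‖₁. -/
/-- Prox optimality of scalar soft-thresholding. -/
lemma soft_prox_aux (t : ℝ) (ht : 0 ≤ t) (v u : ℝ) :
    1/2*(Real.sign v * max 0 (|v| - t) - v)^2 + t*|Real.sign v * max 0 (|v| - t)|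
      ≤ 1/2*(u - v)^2 + t*|u| := by
  rcases lt_trichotomy v 0 with hv|hv|hv
  · rw [Real.sign_of_neg hv, abs_of_neg hv]
    rcases le_or_gt (-v) t with h|h
    · rw [max_eq_left (by linarith)]
      simp only [mul_zero, abs_zero]
      rcases abs_cases u with ⟨h1,h2⟩|⟨h1,h2⟩ <;> nlinarith
    · rw [max_eq_right (by linarith)]
      rw [show (-1 : ℝ) * (-v - t) = v + t by ring, abs_of_nonpos (by linarith)]
      rcases abs_cases u with ⟨h1,h2⟩|⟨h1,h2⟩ <;>
        nlinarith [sq_nonneg (u - v - t), sq_nonneg (u - v + t)]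
  · subst hv; simp
    rcases abs_cases u with ⟨h1,h2⟩|⟨h1,h2⟩ <;> nlinarith
  · rw [Real.sign_of_pos hv, abs_of_pos hv]
    rcases le_or_gt v t with h|h
    · rw [max_eq_left (by linarith)]
      simp only [mul_zero, abs_zero]
      rcases abs_cases u with ⟨h1,h2⟩|⟨h1,h2⟩ <;> nlinarith
    · rw [max_eq_right (by linarith)]
      rw [one_mul, abs_of_nonneg (by linarith)]
      rcases abs_cases u with ⟨h1,h2⟩|⟨h1,h2⟩ <;>
        nlinarith [sq_nonneg (u - v + t), sq_nonneg (u - v - t)]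

lemma normsq_eq_aux {n : ℕ} (v : EuclideanSpace ℝ (Fin n)) : ‖v‖^2 = ∑ i, (v i)^2 := by
  rw [EuclideanSpace.norm_eq, Real.sq_sqrt (by positivity)]
  simp [Real.norm_eq_abs, sq_abs]

lemma inner_eq_aux {n : ℕ} (v w : EuclideanSpace ℝ (Fin n)) :
    (inner ℝ v w : ℝ) = ∑ i, v i * w i := by
  simp [PiLp.inner_apply, RCLike.inner_apply, mul_comm]

/-- Coordinatewise soft-thresholding with threshold `t`. -/
noncomputable def softVec {q : ℕ} (t : ℝ) (v : EuclideanSpace ℝ (Fin q)) :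
    EuclideanSpace ℝ (Fin q) := WithLp.toLp 2 (fun i => Real.sign (v i) * max 0 (|v i| - t))

/-- One proximal-gradient step with step `1/α`, `α ≥ ‖D‖²`, does not increase the
Lasso objective. -/
theorem stmt_10 {m q : ℕ}
    (D : EuclideanSpace ℝ (Fin q) →L[ℝ] EuclideanSpace ℝ (Fin m))
    (x : EuclideanSpace ℝ (Fin m)) (lam α : ℝ)
    (hlam : 0 < lam) (hα0 : 0 < α) (hα : ‖D‖^2 ≤ α)
    (z zp : EuclideanSpace ℝ (Fin q))
    (hstep : zp = softVec (lam/α) (z - (1/α) • (ContinuousLinearMap.adjoint D) (D z - x))) :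
    (1/2) * ‖x - D zp‖^2 + lam * ∑ i, |zp i| ≤ (1/2) * ‖x - D z‖^2 + lam * ∑ i, |z i| := by
  set g : EuclideanSpace ℝ (Fin q) := (ContinuousLinearMap.adjoint D) (D z - x) with hg
  have ht : (0:ℝ) ≤ lam/α := le_of_lt (div_pos hlam hα0)
  -- coordinatewise prox inequality, rearranged
  have key : ∀ i : Fin q,
      1/2*(zp i - z i)^2 + (1/α)*(g i * (zp i - z i)) + (lam/α)*|zp i|
        ≤ (lam/α)*|z i| := by
    intro i
    have hz : zp i = Real.sign (z i - (1/α) * g i) *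
        max 0 (|z i - (1/α) * g i| - lam/α) := by
      rw [hstep]
      simp [softVec, PiLp.sub_apply, PiLp.smul_apply, smul_eq_mul]
    have h := soft_prox_aux (lam/α) ht (z i - (1/α) * g i) (z i)
    rw [← hz] at h
    have hα' : α ≠ 0 := ne_of_gt hα0
    nlinarith [h, sq_nonneg (zp i - z i)]
  -- sum it
  have hsum : ∑ i, (1/2*(zp i - z i)^2 + (1/α)*(g i * (zp i - z i)) + (lam/α)*|zp i|)
      ≤ ∑ i, (lam/α)*|z i| :=
    Finset.sum_le_sum fun i _ => key i
  rw [Finset.sum_add_distrib, Finset.sum_add_distrib] at hsum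
  simp only [← Finset.mul_sum] at hsum
  -- inner product identity
  have hip : ∑ i, g i * (zp i - z i) = (inner ℝ (D z - x) (D (zp - z)) : ℝ) := by
    have h0 : ∀ i : Fin q, g i * (zp i - z i) = g i * (zp - z) i := fun i => by
      rw [PiLp.sub_apply]
    rw [Finset.sum_congr rfl fun i _ => h0 i, ← inner_eq_aux, hg,
      ContinuousLinearMap.adjoint_inner_left]
  -- norm expansion
  have hexp : ‖x - D zp‖^2 = ‖x - D z‖^2 + 2*(inner ℝ (D z - x) (D (zp - z)) : ℝ)
      + ‖D (zp - z)‖^2 := by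
    have h1 : x - D zp = (x - D z) - D (zp - z) := by
      rw [map_sub]; abel
    rw [h1, @norm_sub_sq_real]
    have : (inner ℝ (x - D z) (D (zp - z)) : ℝ) = - inner ℝ (D z - x) (D (zp - z)) := by
      rw [show x - D z = -(D z - x) by abel, inner_neg_left]
    rw [this]; ring
  -- Lipschitz bound
  have hL : ‖D (zp - z)‖^2 ≤ α * ∑ i, (zp i - z i)^2 := by
    have h1 : ‖D (zp - z)‖ ≤ ‖D‖ * ‖zp - z‖ := D.le_opNorm _
    have h2 : ‖D (zp - z)‖^2 ≤ ‖D‖^2 * ‖zp - z‖^2 := by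
      rw [← mul_pow]; exact pow_le_pow_left₀ (norm_nonneg _) h1 2
    have h3 : ‖zp - z‖^2 = ∑ i, (zp i - z i)^2 := by
      rw [normsq_eq_aux]
      exact Finset.sum_congr rfl fun i _ => by rw [PiLp.sub_apply]
    calc ‖D (zp - z)‖^2 ≤ ‖D‖^2 * ‖zp - z‖^2 := h2
      _ ≤ α * ‖zp - z‖^2 := by nlinarith [sq_nonneg ‖zp - z‖]
      _ = α * ∑ i, (zp i - z i)^2 := by rw [h3]
  -- combine
  have hα' : α ≠ 0 := ne_of_gt hα0
  have hmul := mul_le_mul_of_nonneg_left hsum (le_of_lt hα0)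
  rw [hip] at hmul
  have e1 : α * (1/2 * ∑ i, (zp i - z i)^2 + 1/α * (inner ℝ (D z - x) (D (zp - z)) : ℝ)
      + lam/α * ∑ i, |zp i|)
      = α/2 * ∑ i, (zp i - z i)^2 + (inner ℝ (D z - x) (D (zp - z)) : ℝ)
        + lam * ∑ i, |zp i| := by field_simp
  have e2 : α * (lam/α * ∑ i, |z i|) = lam * ∑ i, |z i| := by field_simp
  rw [e1, e2] at hmul
  nlinarith [hmul, hexp, hL]
end

section
/- Beck–Teboulle sublinear convergence of ISTA: let F(z) = f(z) + g(z) with f(z) = (1/2)‖x − Dz‖₂² and g(z) = λ‖z‖₁, let α ≥ ‖D‖², and define the iterates z^{k+1} = π_{λ/α}(z^k − (1/α)∇f(z^k)) starting from z⁰ = 0. Then for every minimizer z* of F and every T ≥ 1, F(z^T) − F(z*) ≤ (α/(2T))‖z⁰ − z*‖₂² = (α/(2T))‖z*‖₂². -/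
lemma soft1 (t v w : ℝ) (ht : 0 ≤ t) :
    t * |Real.sign v * max 0 (|v| - t)| +
      (v - Real.sign v * max 0 (|v| - t)) * (w - Real.sign v * max 0 (|v| - t)) ≤ t * |w| := by
  have habs : v * w ≤ |v| * |w| := by
    calc v * w ≤ |v * w| := le_abs_self _
    _ = |v| * |w| := abs_mul v w
  rcases lt_trichotomy v 0 with hv | hv | hv
  · rw [Real.sign_of_neg hv]
    rcases le_or_gt (-v) t with h | h
    · rw [abs_of_neg hv, max_eq_left (by linarith)]
      simp only [mul_zero, sub_zero, abs_zero]
      rw [abs_of_neg hv] at habs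
      nlinarith [abs_nonneg w]
    · rw [abs_of_neg hv, max_eq_right (by linarith)]
      have h1 : (-1 : ℝ) * (-v - t) = v + t := by ring
      rw [h1, abs_of_neg (by linarith : v + t < 0)]
      nlinarith [neg_abs_le w, le_abs_self w]
  · rw [hv]
    simp [Real.sign_zero]
    positivity
  · rw [Real.sign_of_pos hv]
    rcases le_or_gt v t with h | h
    · rw [abs_of_pos hv, max_eq_left (by linarith)]
      simp only [mul_zero, sub_zero, abs_zero]
      rw [abs_of_pos hv] at habs
      nlinarith [abs_nonneg w]
    · rw [abs_of_pos hv, max_eq_right (by linarith)]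
      have h1 : (1 : ℝ) * (v - t) = v - t := by ring
      rw [h1, abs_of_pos (by linarith : (0:ℝ) < v - t)]
      nlinarith [neg_abs_le w, le_abs_self w]

lemma gsub {q : ℕ} (lam α : ℝ) (hlam : 0 < lam) (hα : 0 < α)
    (v w : EuclideanSpace ℝ (Fin q)) :
    lam * ∑ i, |softVec (lam/α) v i| +
      α * (inner ℝ (v - softVec (lam/α) v) (w - softVec (lam/α) v) : ℝ) ≤ lam * ∑ i, |w i| := by
  set t := lam / α with htdef
  have ht : 0 ≤ t := by positivity
  have hinner : (inner ℝ (v - softVec t v) (w - softVec t v) : ℝ) =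
      ∑ i, (v i - softVec t v i) * (w i - softVec t v i) := by
    rw [PiLp.inner_apply]; refine Finset.sum_congr rfl fun i _ => ?_; simp [PiLp.sub_apply, mul_comm]
  rw [hinner, Finset.mul_sum, Finset.mul_sum, Finset.mul_sum, ← Finset.sum_add_distrib]
  apply Finset.sum_le_sum
  intro i _
  have key := soft1 t (v i) (w i) ht
  have hlat : lam = α * t := by rw [htdef]; field_simp
  have hu : softVec t v i = Real.sign (v i) * max 0 (|v i| - t) := by rw [softVec]
  rw [hu, hlat]
  nlinarith [mul_le_mul_of_nonneg_left key hα.le]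

lemma fexp {m q : ℕ} (D : EuclideanSpace ℝ (Fin q) →L[ℝ] EuclideanSpace ℝ (Fin m))
    (x : EuclideanSpace ℝ (Fin m)) (a b : EuclideanSpace ℝ (Fin q)) :
    (1/2 : ℝ) * ‖x - D b‖^2 =
      (1/2) * ‖x - D a‖^2 + (inner ℝ ((ContinuousLinearMap.adjoint D) (D a - x)) (b - a) : ℝ)
        + (1/2) * ‖D (b - a)‖^2 := by
  have h1 : x - D b = (x - D a) - D (b - a) := by rw [map_sub]; abel
  rw [h1, norm_sub_sq_real, ContinuousLinearMap.adjoint_inner_left]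
  have h2 : (inner ℝ (D a - x) (D (b - a)) : ℝ) = -(inner ℝ (x - D a) (D (b - a)) : ℝ) := by
    rw [← inner_neg_left]; congr 1; abel
  rw [h2]; ring

set_option maxHeartbeats 1000000 in
lemma step_lemma {m q : ℕ}
    (D : EuclideanSpace ℝ (Fin q) →L[ℝ] EuclideanSpace ℝ (Fin m))
    (x : EuclideanSpace ℝ (Fin m)) (lam α : ℝ)
    (hlam : 0 < lam) (hα0 : 0 < α) (hα : ‖D‖^2 ≤ α)
    (a w u : EuclideanSpace ℝ (Fin q))
    (hu : u = softVec (lam/α) (a - (1/α) • (ContinuousLinearMap.adjoint D) (D a - x))) :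
    ((1/2) * ‖x - D u‖^2 + lam * ∑ i, |u i|) -
      ((1/2) * ‖x - D w‖^2 + lam * ∑ i, |w i|) ≤ α/2 * (‖a - w‖^2 - ‖u - w‖^2) := by
  set gr := (ContinuousLinearMap.adjoint D) (D a - x) with hgr
  set v := a - (1/α) • gr with hv
  -- quadratic expansions
  have h1 := fexp D x a u
  have h2 := fexp D x a w
  -- operator norm bound
  have h4 : ‖D (u - a)‖^2 ≤ α * ‖u - a‖^2 := by
    have := D.le_opNorm (u - a)
    nlinarith [norm_nonneg (D (u - a)), norm_nonneg (u - a), norm_nonneg D]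
  -- g subgradient
  have h3 := gsub lam α hlam hα0 v w
  rw [← hu] at h3
  -- rewrite α * ⟪v - u, w - u⟫
  have h5 : α * (inner ℝ (v - u) (w - u) : ℝ)
      = α * (inner ℝ (a - u) (w - u) : ℝ) - (inner ℝ gr (w - u) : ℝ) := by
    have : v - u = (a - u) - (1/α) • gr := by rw [hv]; abel
    rw [this, inner_sub_left, real_inner_smul_left]
    field_simp
  rw [h5] at h3
  -- three-point identity
  rw [norm_sub_rev u a] at h4
  have h6 : ‖a - w‖^2 = ‖a - u‖^2 + 2 * (inner ℝ (a - u) (u - w) : ℝ) + ‖u - w‖^2 := by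
    have : a - w = (a - u) + (u - w) := by abel
    rw [this, norm_add_sq_real]
  have h8 : (inner ℝ (a - u) (w - u) : ℝ) = -(inner ℝ (a - u) (u - w) : ℝ) := by
    rw [← inner_neg_right]; congr 1; abel
  have h8' : α * (inner ℝ (a - u) (w - u) : ℝ) = -(α * (inner ℝ (a - u) (u - w) : ℝ)) := by
    rw [h8]; ring
  rw [h8'] at h3
  -- gradient terms cancel
  have h7 : (inner ℝ gr (u - a) : ℝ) - (inner ℝ gr (w - a) : ℝ) + (inner ℝ gr (w - u) : ℝ) = 0 := by
    simp only [inner_sub_right]; ring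
  have h6' : α/2 * (‖a - w‖^2 - ‖u - w‖^2)
      = α/2 * ‖a - u‖^2 + α * (inner ℝ (a - u) (u - w) : ℝ) := by rw [h6]; ring
  have h10 : (0:ℝ) ≤ ‖D (w - a)‖^2 := by positivity
  rw [h6']
  linarith [h1, h2, h3, h4, h7, h10]

/-- Beck–Teboulle sublinear convergence of ISTA. -/
theorem stmt_11 {m q : ℕ}
    (D : EuclideanSpace ℝ (Fin q) →L[ℝ] EuclideanSpace ℝ (Fin m))
    (x : EuclideanSpace ℝ (Fin m)) (lam α : ℝ)
    (hlam : 0 < lam) (hα0 : 0 < α) (hα : ‖D‖^2 ≤ α)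
    (z : ℕ → EuclideanSpace ℝ (Fin q)) (h0 : z 0 = 0)
    (hiter : ∀ k, z (k+1) =
      softVec (lam/α) (z k - (1/α) • (ContinuousLinearMap.adjoint D) (D (z k) - x)))
    (zs : EuclideanSpace ℝ (Fin q))
    (hzs : ∀ w : EuclideanSpace ℝ (Fin q),
      (1/2) * ‖x - D zs‖^2 + lam * ∑ i, |zs i| ≤ (1/2) * ‖x - D w‖^2 + lam * ∑ i, |w i|)
    (T : ℕ) (hT : 1 ≤ T) :
    ((1/2) * ‖x - D (z T)‖^2 + lam * ∑ i, |z T i|) -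
      ((1/2) * ‖x - D zs‖^2 + lam * ∑ i, |zs i|) ≤ α / (2 * T) * ‖zs‖^2 := by
  set F : EuclideanSpace ℝ (Fin q) → ℝ :=
    fun w => (1/2) * ‖x - D w‖^2 + lam * ∑ i, |w i| with hF
  clear_value F
  have hstep : ∀ k (w : EuclideanSpace ℝ (Fin q)),
      F (z (k+1)) - F w ≤ α/2 * (‖z k - w‖^2 - ‖z (k+1) - w‖^2) := by
    intro k w
    simp only [hF]
    exact step_lemma D x lam α hlam hα0 hα (z k) w (z (k+1)) (hiter k)
  have hmono : ∀ k, F (z (k+1)) ≤ F (z k) := by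
    intro k
    have h := hstep k (z k)
    simp only [sub_self, norm_zero] at h
    have h' : α/2 * ((0:ℝ)^2 - ‖z (k+1) - z k‖^2) = -(α/2 * ‖z (k+1) - z k‖^2) := by ring
    rw [h'] at h
    have hm2 : (0:ℝ) ≤ α/2 * ‖z (k+1) - z k‖^2 := by positivity
    linarith
  have hanti : Antitone fun k => F (z k) := antitone_nat_of_succ_le hmono
  have hsum : ∑ k ∈ Finset.range T, (F (z (k+1)) - F zs)
      ≤ α/2 * (‖z 0 - zs‖^2 - ‖z T - zs‖^2) := by
    calc ∑ k ∈ Finset.range T, (F (z (k+1)) - F zs)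
        ≤ ∑ k ∈ Finset.range T, α/2 * (‖z k - zs‖^2 - ‖z (k+1) - zs‖^2) :=
          Finset.sum_le_sum fun k _ => hstep k zs
      _ = α/2 * ∑ k ∈ Finset.range T,
            ((fun j => ‖z j - zs‖^2) k - (fun j => ‖z j - zs‖^2) (k+1)) := by
          rw [Finset.mul_sum]
      _ = α/2 * (‖z 0 - zs‖^2 - ‖z T - zs‖^2) := by rw [Finset.sum_range_sub']
  have hlb : (T:ℝ) * (F (z T) - F zs) ≤ ∑ k ∈ Finset.range T, (F (z (k+1)) - F zs) := by
    have h1 : ∀ k ∈ Finset.range T, F (z T) - F zs ≤ F (z (k+1)) - F zs := by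
      intro k hk
      have : F (z T) ≤ F (z (k+1)) := hanti (Finset.mem_range.mp hk)
      linarith
    calc (T:ℝ) * (F (z T) - F zs) = ∑ _k ∈ Finset.range T, (F (z T) - F zs) := by
          rw [Finset.sum_const, Finset.card_range, nsmul_eq_mul]
      _ ≤ _ := Finset.sum_le_sum h1
  have hz0 : ‖z 0 - zs‖ = ‖zs‖ := by rw [h0, zero_sub, norm_neg]
  have hbound : (T:ℝ) * (F (z T) - F zs) ≤ α/2 * ‖zs‖^2 := by
    have h2 : (0:ℝ) ≤ ‖z T - zs‖^2 := by positivity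
    calc (T:ℝ) * (F (z T) - F zs) ≤ α/2 * (‖z 0 - zs‖^2 - ‖z T - zs‖^2) :=
          le_trans hlb hsum
      _ ≤ α/2 * ‖z 0 - zs‖^2 := by nlinarith
      _ = α/2 * ‖zs‖^2 := by rw [hz0]
  have hTpos : (0:ℝ) < T := by exact_mod_cast Nat.lt_of_lt_of_le Nat.zero_lt_one hT
  have : F (z T) - F zs ≤ α / (2 * T) * ‖zs‖^2 := by
    rw [div_mul_eq_mul_div, le_div_iff₀ (by positivity : (0:ℝ) < 2 * T)]
    calc (F (z T) - F zs) * (2 * T) = 2 * ((T:ℝ) * (F (z T) - F zs)) := by ring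
      _ ≤ 2 * (α/2 * ‖zs‖^2) := by linarith
      _ = α * ‖zs‖^2 := by ring
  simp only [hF] at this
  convert this using 2 <;> ring
end
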